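/- Let n ≥ 1, d ∈ ℝⁿ and γ > 0. A vector c ∈ ℝⁿ is a minimizer of the affine-constrained ℓ1 proximal problem if and only if Σᵢ cᵢ = 1 and there exists a scalar β ∈ ℝ such that cᵢ = S_γ(dᵢ − β) for every i. -/

import Mathlib

/-- The soft-thresholding operator `S_γ(v) = sign(v) · max(|v| − γ, 0)`. -/
noncomputable def softThresh (γ v : ℝ) : ℝ := Real.sign v * max (|v| - γ) 0

lemma softThresh_eq (γ v : ℝ) (hγ : 0 ≤ γ) :
    softThresh γ v = max (v - γ) 0 - max (-v - γ) 0 := by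
  unfold softThresh
  rcases lt_trichotomy v 0 with h | h | h
  · rw [Real.sign_of_neg h, abs_of_neg h,
      max_eq_right (by linarith : v - γ ≤ 0)]
    ring
  · simp [h, max_eq_right (by linarith : -γ ≤ (0:ℝ))]
  · rw [Real.sign_of_pos h, abs_of_pos h,
      max_eq_right (by linarith : -v - γ ≤ 0)]
    ring

lemma key1 (γ a t : ℝ) (hγ : 0 < γ) :
    (1/2)*(softThresh γ a - a)^2 + γ*|softThresh γ a|
      + (1/2)*(t - softThresh γ a)^2 ≤ (1/2)*(t - a)^2 + γ*|t| := by
  rw [softThresh_eq γ a hγ.le]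
  rcases abs_cases t with ⟨ht, ht'⟩ | ⟨ht, ht'⟩ <;> rw [ht]
  all_goals rcases lt_or_ge γ a with h1 | h1
  · rw [max_eq_left (by linarith), max_eq_right (by linarith),
      abs_of_nonneg (by linarith)]
    nlinarith
  case inl.inr =>
    rcases lt_or_ge a (-γ) with h2 | h2
    · rw [max_eq_right (by linarith), max_eq_left (by linarith),
        abs_of_nonpos (by linarith)]
      nlinarith
    · rw [max_eq_right (by linarith), max_eq_right (by linarith)]
      simp only [sub_zero, abs_zero]
      nlinarith
  · rw [max_eq_left (by linarith), max_eq_right (by linarith),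
      abs_of_nonneg (by linarith)]
    nlinarith
  · rcases lt_or_ge a (-γ) with h2 | h2
    · rw [max_eq_right (by linarith), max_eq_left (by linarith),
        abs_of_nonpos (by linarith)]
      nlinarith
    · rw [max_eq_right (by linarith), max_eq_right (by linarith)]
      simp only [sub_zero, abs_zero]
      nlinarith

lemma strong (n : ℕ) (d : Fin n → ℝ) (γ : ℝ) (hγ : 0 < γ) (β : ℝ)
    (c : Fin n → ℝ) (hc : ∀ i, c i = softThresh γ (d i - β))
    (hsum : ∑ i, c i = 1) (c' : Fin n → ℝ) (hsum' : ∑ i, c' i = 1) :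
    (1/2) * ∑ i, (c i - d i)^2 + γ * ∑ i, |c i| + (1/2) * ∑ i, (c' i - c i)^2
      ≤ (1/2) * ∑ i, (c' i - d i)^2 + γ * ∑ i, |c' i| := by
  have hkey : ∑ i, ((1/2)*(c i - (d i - β))^2 + γ*|c i| + (1/2)*(c' i - c i)^2)
      ≤ ∑ i, ((1/2)*(c' i - (d i - β))^2 + γ*|c' i|) := by
    refine Finset.sum_le_sum fun i _ => ?_
    rw [hc i]
    exact key1 γ (d i - β) (c' i) hγ
  have expand : ∀ x : Fin n → ℝ, (∑ i, x i = 1) →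
      ∑ i, (1/2)*(x i - (d i - β))^2
        = ∑ i, (1/2)*(x i - d i)^2 + β + ∑ i, ((1/2)*β^2 - β * d i) := by
    intro x hx
    have : ∑ i, (1/2)*(x i - (d i - β))^2
        = ∑ i, ((1/2)*(x i - d i)^2 + β * x i + ((1/2)*β^2 - β * d i)) := by
      refine Finset.sum_congr rfl fun i _ => by ring
    have hb : ∑ i, β * x i = β := by rw [← Finset.mul_sum, hx, mul_one]
    rw [this, Finset.sum_add_distrib, Finset.sum_add_distrib, hb]
  have h1 := expand c hsum
  have h2 := expand c' hsum'
  rw [Finset.mul_sum, Finset.mul_sum, Finset.mul_sum, Finset.mul_sum, Finset.mul_sum]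
  have e1 : ∑ i, ((1/2)*(c i - (d i - β))^2 + γ*|c i| + (1/2)*(c' i - c i)^2)
      = ∑ i, (1/2)*(c i - (d i - β))^2 + ∑ i, γ*|c i| + ∑ i, (1/2)*(c' i - c i)^2 := by
    rw [Finset.sum_add_distrib, Finset.sum_add_distrib]
  have e2 : ∑ i, ((1/2)*(c' i - (d i - β))^2 + γ*|c' i|)
      = ∑ i, (1/2)*(c' i - (d i - β))^2 + ∑ i, γ*|c' i| := Finset.sum_add_distrib
  rw [e1, e2, h1, h2] at hkey
  linarith

lemma exists_beta (n : ℕ) (hn : 1 ≤ n) (d : Fin n → ℝ) (γ : ℝ) (hγ : 0 < γ) :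
    ∃ β : ℝ, ∑ i, softThresh γ (d i - β) = 1 := by
  have hne : (Finset.univ : Finset (Fin n)).Nonempty := ⟨⟨0, hn⟩, Finset.mem_univ _⟩
  set φ : ℝ → ℝ := fun β => ∑ i, (max (d i - β - γ) 0 - max (-(d i - β) - γ) 0) with hφ
  have hcont : Continuous φ := by
    apply continuous_finset_sum
    intro i _
    fun_prop
  set β₀ : ℝ := Finset.univ.inf' hne d - γ - 1 with hβ₀
  set β₁ : ℝ := Finset.univ.sup' hne d + γ with hβ₁
  have hle : β₀ ≤ β₁ := by
    have hj := Finset.mem_univ (⟨0, hn⟩ : Fin n)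
    have h1 : Finset.univ.inf' hne d ≤ Finset.univ.sup' hne d :=
      le_trans (Finset.inf'_le _ hj) (Finset.le_sup' _ hj)
    simp only [hβ₀, hβ₁]; linarith
  have h0 : (1:ℝ) ≤ φ β₀ := by
    have : ∑ i : Fin n, (1:ℝ) ≤ φ β₀ := by
      refine Finset.sum_le_sum fun i _ => ?_
      have hinf : Finset.univ.inf' hne d ≤ d i := Finset.inf'_le _ (Finset.mem_univ i)
      have h1 : max (d i - β₀ - γ) 0 ≥ 1 :=
        le_max_of_le_left (by simp only [hβ₀]; linarith)
      have h2 : max (-(d i - β₀) - γ) 0 = 0 :=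
        max_eq_right (by simp only [hβ₀]; linarith)
      rw [h2]; linarith
    have hcard : ∑ i : Fin n, (1:ℝ) = n := by simp
    rw [hcard] at this
    calc (1:ℝ) ≤ n := by exact_mod_cast hn
    _ ≤ φ β₀ := this
  have h1 : φ β₁ ≤ 1 := by
    have : φ β₁ ≤ ∑ i : Fin n, (0:ℝ) := by
      refine Finset.sum_le_sum fun i _ => ?_
      have hsup : d i ≤ Finset.univ.sup' hne d := Finset.le_sup' _ (Finset.mem_univ i)
      have ha : max (d i - β₁ - γ) 0 = 0 := max_eq_right (by simp only [hβ₁]; linarith)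
      have hb : (0:ℝ) ≤ max (-(d i - β₁) - γ) 0 := le_max_right _ _
      rw [ha]; linarith
    simp at this; linarith
  have := intermediate_value_Icc' hle hcont.continuousOn
  have hmem : (1:ℝ) ∈ Set.Icc (φ β₁) (φ β₀) := ⟨h1, h0⟩
  obtain ⟨β, _, hβ⟩ := this hmem
  refine ⟨β, ?_⟩
  rw [← hβ]
  refine Finset.sum_congr rfl fun i _ => ?_
  rw [softThresh_eq γ (d i - β) hγ.le]

/-- `c` is a minimizer of the affine-constrained ℓ1 proximal
problem iff `∑ᵢ cᵢ = 1` and there is a scalar `β` with `cᵢ = S_γ(dᵢ − β)` for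
every `i`. -/
theorem stmt2 (n : ℕ) (hn : 1 ≤ n) (d : Fin n → ℝ) (γ : ℝ) (hγ : 0 < γ)
    (c : Fin n → ℝ) :
    ((∑ i, c i = 1) ∧
      ∀ c' : Fin n → ℝ, (∑ i, c' i = 1) →
        (1/2) * ∑ i, (c i - d i)^2 + γ * ∑ i, |c i|
          ≤ (1/2) * ∑ i, (c' i - d i)^2 + γ * ∑ i, |c' i|)
    ↔ ((∑ i, c i = 1) ∧ ∃ β : ℝ, ∀ i, c i = softThresh γ (d i - β)) := by
  constructor
  · rintro ⟨hsum, hmin⟩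
    refine ⟨hsum, ?_⟩
    obtain ⟨β, hβ⟩ := exists_beta n hn d γ hγ
    set c₀ : Fin n → ℝ := fun i => softThresh γ (d i - β) with hc₀
    refine ⟨β, fun i => ?_⟩
    have hstrong := strong n d γ hγ β c₀ (fun _ => rfl) hβ c hsum
    have hmin' := hmin c₀ hβ
    have hnn : ∀ j ∈ Finset.univ, (0:ℝ) ≤ (c j - c₀ j)^2 := fun j _ => sq_nonneg _
    have hz : ∑ j, (c j - c₀ j)^2 = 0 := by
      have hle : ∑ j, (c j - c₀ j)^2 ≤ 0 := by linarith
      exact le_antisymm hle (Finset.sum_nonneg hnn)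
    have hzi := (Finset.sum_eq_zero_iff_of_nonneg hnn).mp hz i (Finset.mem_univ i)
    have := sub_eq_zero.mp (sq_eq_zero_iff.mp hzi)
    simpa [hc₀] using this
  · rintro ⟨hsum, β, hc⟩
    refine ⟨hsum, fun c' hsum' => ?_⟩
    have hstrong := strong n d γ hγ β c hc hsum c' hsum'
    have hnn : (0:ℝ) ≤ ∑ i, (c' i - c i)^2 :=
      Finset.sum_nonneg fun i _ => sq_nonneg _
    linarith
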